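/- Let I be a finite set with at least 2 elements, (t_a)_{a in I} an injective family of elements of k, (m_a)_{a in I} a family of positive integers, N := sum_{a in I} m_a, and M := N + card(I) − 1; assume M < p. Let P be a polynomial over k with deg P = N and P(t_a) ≠ 0 for every a in I. Let û be the formal power series û := rev(P) · (prod_{a in I} (1 − t_a x)^{m_a})^{−1} in k[[x]] (the expansion at infinity, in the variable x = 1/X, of the rational function u = P / prod_{a in I}(X − t_a)^{m_a}). Then the formal derivative of û is nonzero and its x-adic order is at most N − 1, which is at most M − 2. (Hence the differential du cannot vanish to order M − 1 at infinity; this is the key step, in the structure theorem for order-p automorphisms of formal annuli with small conductors, showing that an additive fundamental vertex cannot have both of its fundamental edges with positive slope.) -/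

import Mathlib

open Polynomial PowerSeries

/-- with `û = rev(P)·(∏_a (1 − t_a x)^{m_a})⁻¹ ∈ k[[x]]` (the expansion at
infinity of `u = P/∏_a (X − t_a)^{m_a}`), the formal derivative of `û` is nonzero and its
`x`-adic order is at most `N − 1 ≤ M − 2`. -/
theorem stmt_11 {p : ℕ} (hp : p.Prime) (k : Type*) [Field k] [CharP k p]
    (I : Type*) [Fintype I] (hI : 2 ≤ Fintype.card I)
    (t : I → k) (htinj : Function.Injective t)
    (m' : I → ℕ) (hm' : ∀ a, 0 < m' a)
    (N M : ℕ) (hN : N = ∑ a, m' a) (hM : M = N + Fintype.card I - 1) (hMp : M < p)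
    (P : Polynomial k) (hdeg : P.degree = (N : ℕ)) (hPt : ∀ a, P.eval (t a) ≠ 0) :
    PowerSeries.derivativeFun
        ((P.reverse : PowerSeries k) *
          (((∏ a, (1 - Polynomial.C (t a) * Polynomial.X) ^ m' a : Polynomial k) :
            PowerSeries k))⁻¹) ≠ 0 ∧
      PowerSeries.order (PowerSeries.derivativeFun
        ((P.reverse : PowerSeries k) *
          (((∏ a, (1 - Polynomial.C (t a) * Polynomial.X) ^ m' a : Polynomial k) :
            PowerSeries k))⁻¹)) ≤ (N - 1 : ℕ) ∧
      N - 1 ≤ M - 2 := by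
  set Q : Polynomial k := ∏ a, (1 - Polynomial.C (t a) * Polynomial.X) ^ m' a with hQdef
  set u : PowerSeries k := (P.reverse : PowerSeries k) * ((Q : Polynomial k) : PowerSeries k)⁻¹
    with hu
  have hcard : Fintype.card I ≤ N := by
    rw [hN]
    calc Fintype.card I = ∑ _a : I, 1 := by simp
      _ ≤ ∑ a, m' a := Finset.sum_le_sum fun a _ => hm' a
  have hN2 : 2 ≤ N := le_trans hI hcard
  have hNM : N - 1 ≤ M - 2 := by omega
  have hPnd : P.natDegree = N := natDegree_eq_of_degree_eq_some hdeg
  -- constant coefficient of Q is 1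
  have hQ0 : PowerSeries.constantCoeff (Q : PowerSeries k) = 1 := by
    have : Q.coeff 0 = 1 := by
      rw [Polynomial.coeff_zero_eq_eval_zero, hQdef, Polynomial.eval_prod]
      simp
    rw [← PowerSeries.coeff_zero_eq_constantCoeff_apply, Polynomial.coeff_coe, this]
  have hQ0' : PowerSeries.constantCoeff (Q : PowerSeries k) ≠ 0 := by
    rw [hQ0]; exact one_ne_zero
  -- Q * u = rev P
  have hQu : (Q : PowerSeries k) * u = (P.reverse : PowerSeries k) := by
    rw [hu, mul_comm ((P.reverse : PowerSeries k)) _, ← mul_assoc,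
      PowerSeries.mul_inv_cancel _ hQ0', one_mul]
  -- degree bound on Q
  have hQnd : Q.natDegree ≤ N := by
    rw [hQdef, hN]
    refine le_trans (Polynomial.natDegree_prod_le Finset.univ _) (Finset.sum_le_sum fun a _ => ?_)
    refine le_trans Polynomial.natDegree_pow_le ?_
    have h1 : (1 - Polynomial.C (t a) * Polynomial.X : Polynomial k).natDegree ≤ 1 := by
      refine le_trans (Polynomial.natDegree_sub_le _ _) ?_
      simp [Polynomial.natDegree_C_mul_le]
      exact le_trans (Polynomial.natDegree_C_mul_le _ _) (by simp)
    calc m' a * (1 - Polynomial.C (t a) * Polynomial.X : Polynomial k).natDegree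
        ≤ m' a * 1 := Nat.mul_le_mul_left _ h1
      _ = m' a := Nat.mul_one _
  -- key: some coefficient of u in [1, N] is nonzero
  have key : ∃ n, 1 ≤ n ∧ n ≤ N ∧ PowerSeries.coeff n u ≠ 0 := by
    by_contra hall
    push_neg at hall
    set c₀ : k := PowerSeries.coeff 0 u with hc₀
    have hPQ : P.reverse = Polynomial.C c₀ * Q := by
      ext n
      rcases le_or_gt n N with hn | hn
      · have h1 : (PowerSeries.coeff n) ((Q : PowerSeries k) * u) = Q.coeff n * c₀ := by
          rw [PowerSeries.coeff_mul]
          rw [Finset.sum_eq_single (n, 0)]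
          · rw [Polynomial.coeff_coe]
          · rintro ⟨i, j⟩ hij hne
            rw [Finset.HasAntidiagonal.mem_antidiagonal] at hij
            have hj : 1 ≤ j := by
              rcases Nat.eq_zero_or_pos j with h | h
              · exact absurd (by simp [h, ← hij]) hne
              · exact h
            rw [hall j hj (le_trans (by omega) hn), mul_zero]
          · intro h
            exact absurd (Finset.HasAntidiagonal.mem_antidiagonal.mpr (by simp)) h
        have h2 := congrArg (PowerSeries.coeff n) hQu
        rw [h1, Polynomial.coeff_coe] at h2
        rw [← h2, Polynomial.coeff_C_mul, mul_comm]
      · have hr : P.reverse.coeff n = 0 := by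
          refine Polynomial.coeff_eq_zero_of_natDegree_lt ?_
          exact lt_of_le_of_lt (le_trans (Polynomial.reverse_natDegree_le P) hPnd.le) hn
        have hq : Q.coeff n = 0 :=
          Polynomial.coeff_eq_zero_of_natDegree_lt (lt_of_le_of_lt hQnd hn)
        rw [hr, Polynomial.coeff_C_mul, hq, mul_zero]
    -- pick c with t c ≠ 0
    obtain ⟨c, hc⟩ : ∃ c, t c ≠ 0 := by
      obtain ⟨a, b, hab⟩ := Fintype.exists_pair_of_one_lt_card (lt_of_lt_of_le one_lt_two hI) 
      by_cases h : t a = 0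
      · exact ⟨b, fun hb => hab (htinj (hb.trans h.symm)).symm⟩
      · exact ⟨a, h⟩
    have : Invertible (t c) := invertibleOfNonzero hc
    have hQeval : Q.eval (⅟ (t c)) = 0 := by
      rw [hQdef, Polynomial.eval_prod]
      refine Finset.prod_eq_zero (Finset.mem_univ c) ?_
      rw [Polynomial.eval_pow]
      have : (1 - Polynomial.C (t c) * Polynomial.X : Polynomial k).eval (⅟ (t c)) = 0 := by
        simp [mul_invOf_self]
      rw [this, zero_pow (hm' c).ne']
    have hrev : P.reverse.eval (⅟ (t c)) = 0 := by
      rw [hPQ, Polynomial.eval_mul, Polynomial.eval_C, hQeval, mul_zero]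
    have : P.eval (t c) = 0 := by
      have h := Polynomial.eval₂_reverse_eq_zero_iff (RingHom.id k) (t c) P
      exact h.mp hrev
    exact hPt c this
  obtain ⟨n, hn1, hnN, hcoef⟩ := key
  have hnp : (n : k) ≠ 0 := by
    have : ¬ (p ∣ n) := Nat.not_dvd_of_pos_of_lt (by omega) (by omega)
    simpa [CharP.cast_eq_zero_iff k p n] using this
  have hd : PowerSeries.coeff (n - 1) (PowerSeries.derivativeFun u) ≠ 0 := by
    rw [show PowerSeries.derivativeFun u = PowerSeries.derivative k u from rfl, PowerSeries.coeff_derivative]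
    have h1 : n - 1 + 1 = n := by omega
    rw [← Nat.cast_succ, Nat.succ_eq_add_one, h1]
    exact mul_ne_zero hcoef hnp
  refine ⟨?_, ?_, hNM⟩
  · intro h0
    rw [h0] at hd
    simp at hd
  · exact le_trans (PowerSeries.order_le _ hd) (Nat.cast_le.mpr (Nat.sub_le_sub_right hnN 1))
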